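/- Let H be a real Hilbert space, C ⊆ H closed convex bounded with 0 ∈ C, and f : C → C 1-Lipschitz. For λ ∈ (0,1) let y_λ ∈ C be the unique point with λ f(y_λ) = y_λ. Then y_λ converges weakly as λ → 1 to the orthogonal projection of 0 onto the set Fix(f) of fixed points of f. -/

import Mathlib

open Set Filter Topology

local notation "⟪" x ", " y "⟫" => @inner ℝ _ _ x y

theorem ylam_weak_converges_hilbert
    {H : Type*} [NormedAddCommGroup H] [InnerProductSpace ℝ H] [CompleteSpace H]
    (C : Set H) (hCclosed : IsClosed C) (hC : Convex ℝ C)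
    (hCbdd : Bornology.IsBounded C) (h0 : (0:H) ∈ C)
    (f : H → H) (hf : MapsTo f C C) (hlip : LipschitzOnWith 1 f C)
    (y : ℝ → H) (hy : ∀ l ∈ Ioo (0:ℝ) 1, y l ∈ C ∧ l • f (y l) = y l) :
    ∃ xstar ∈ C, f xstar = xstar ∧ (∀ z ∈ C, f z = z → ‖xstar‖ ≤ ‖z‖) ∧
      ∀ v : H, Tendsto (fun l => (inner ℝ (y l) v : ℝ))
        (nhdsWithin 1 (Ioo (0:ℝ) 1)) (nhds (inner ℝ xstar v)) := by
  set L := nhdsWithin (1:ℝ) (Ioo (0:ℝ) 1) with hLdef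
  have hone : (1:ℝ) ∈ closure (Ioo (0:ℝ) 1) := by
    rw [closure_Ioo (by norm_num : (0:ℝ) ≠ 1)]
    exact ⟨by norm_num, le_refl 1⟩
  have hLne : L.NeBot := mem_closure_iff_nhdsWithin_neBot.mp hone
  -- Lipschitz in norm form
  have hlipn : ∀ a ∈ C, ∀ b ∈ C, ‖f a - f b‖ ≤ ‖a - b‖ := by
    intro a ha b hb
    have := hlip.dist_le_mul a ha b hb
    simpa [dist_eq_norm] using this
  -- unified key inequality
  have key : ∀ l ∈ Ioo (0:ℝ) 1, ∀ μ : ℝ, 0 < μ → μ ≤ 1 → ∀ z ∈ C, μ • f z = z →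
      (1 - l) * ‖y l - z‖^2 ≤ ((l - μ)/μ) * ⟪z, y l - z⟫ := by
    intro l hl μ hμ0 hμ1 z hz hzfix
    obtain ⟨hylC, hylfix⟩ := hy l hl
    set a := y l with ha
    set d := a - z with hd
    have hfz : f z = μ⁻¹ • z := by
      rw [eq_comm, inv_smul_eq_iff₀ (ne_of_gt hμ0), hzfix]
    have hexp : ‖d‖^2 = l * ⟪f a - f z, d⟫ + ((l - μ)/μ) * ⟪z, d⟫ := by
      have h1 : (‖d‖:ℝ)^2 = ⟪d, d⟫ := (real_inner_self_eq_norm_sq d).symm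
      have h2 : d = (l • f a - μ • f z) := by rw [hylfix, hzfix]
      calc ‖d‖^2 = ⟪l • f a - μ • f z, d⟫ := by rw [h1, ← h2]
        _ = l * ⟪f a, d⟫ - μ * ⟪f z, d⟫ := by
            rw [inner_sub_left, real_inner_smul_left, real_inner_smul_left]
        _ = l * ⟪f a - f z, d⟫ + ((l - μ)/μ) * ⟪z, d⟫ := by
            rw [inner_sub_left, hfz, real_inner_smul_left]
            field_simp
            ring
    have hCS : ⟪f a - f z, d⟫ ≤ ‖d‖^2 := by
      calc ⟪f a - f z, d⟫ ≤ ‖f a - f z‖ * ‖d‖ := real_inner_le_norm _ _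
        _ ≤ ‖d‖ * ‖d‖ := by
            have := hlipn a hylC z hz
            nlinarith [norm_nonneg d, norm_nonneg (f a - f z)]
        _ = ‖d‖^2 := (sq ‖d‖).symm
    nlinarith [hl.1.le, hl.2.le, sq_nonneg ‖d‖]
  -- monotone inequality
  have KL : ∀ μ ∈ Ioo (0:ℝ) 1, ∀ l ∈ Ioo (0:ℝ) 1, μ ≤ l →
      ‖y l - y μ‖^2 ≤ ‖y l‖^2 - ‖y μ‖^2 := by
    intro μ hμ l hl hle
    rcases eq_or_lt_of_le hle with rfl | hlt
    · simp
    · have hk := key l hl μ hμ.1 hμ.2.le (y μ) (hy μ hμ).1 (hy μ hμ).2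
      have hpos : (0:ℝ) < (l - μ)/μ := div_pos (by linarith) hμ.1
      have hinner : (0:ℝ) ≤ ⟪y μ, y l - y μ⟫ := by
        nlinarith [sq_nonneg ‖y l - y μ‖, hl.2]
      have hexp : ⟪y μ, y l - y μ⟫ = ⟪y μ, y l⟫ - ‖y μ‖^2 := by
        rw [inner_sub_right, real_inner_self_eq_norm_sq]
      have hnorm : ‖y l - y μ‖^2 = ‖y l‖^2 - 2 * ⟪y l, y μ⟫ + ‖y μ‖^2 :=
        norm_sub_sq_real (y l) (y μ)
      have hcomm : ⟪y l, y μ⟫ = ⟪y μ, y l⟫ := real_inner_comm _ _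
      rw [hexp] at hinner
      linarith
  -- boundedness
  obtain ⟨M, hM⟩ := hCbdd.subset_closedBall (0:H)
  have hbd : ∀ l ∈ Ioo (0:ℝ) 1, ‖y l‖ ≤ M := by
    intro l hl
    have := hM (hy l hl).1
    simpa [Metric.mem_closedBall, dist_eq_norm] using this
  -- the sup of norms squared
  set S : ℝ := sSup ((fun l => ‖y l‖^2) '' Ioo (0:ℝ) 1) with hSdef
  have hne : ((fun l => ‖y l‖^2) '' Ioo (0:ℝ) 1).Nonempty :=
    ⟨_, ⟨(1:ℝ)/2, by norm_num, rfl⟩⟩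
  have hbdd : BddAbove ((fun l => ‖y l‖^2) '' Ioo (0:ℝ) 1) := by
    refine ⟨M^2, ?_⟩
    rintro x ⟨l, hl, rfl⟩
    exact pow_le_pow_left₀ (norm_nonneg (y l)) (hbd l hl) 2
  have hleS : ∀ l ∈ Ioo (0:ℝ) 1, ‖y l‖^2 ≤ S := fun l hl =>
    le_csSup hbdd ⟨l, hl, rfl⟩
  -- Cauchy
  have hcauchy : Cauchy (L.map y) := by
    rw [Metric.cauchy_iff]
    refine ⟨map_neBot, ?_⟩
    intro ε hε
    have hε2 : 0 < ε^2/2 := by positivity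
    obtain ⟨x, ⟨μ₀, hμ₀, rfl⟩, hx⟩ := exists_lt_of_lt_csSup hne (by linarith : S - ε^2/2 < S)
    refine ⟨y '' Ioo μ₀ 1, ?_, ?_⟩
    · rw [mem_map]
      have hmem : Ioo μ₀ 1 ∈ L := by
        rw [hLdef, mem_nhdsWithin]
        exact ⟨Ioi μ₀, isOpen_Ioi, hμ₀.2, fun x hx => ⟨hx.1, hx.2.2⟩⟩
      exact mem_of_superset hmem (fun l hl => ⟨l, hl, rfl⟩)
    · rintro _ ⟨l₁, hl₁, rfl⟩ _ ⟨l₂, hl₂, rfl⟩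
      have hsub : ∀ l, l ∈ Ioo μ₀ 1 → l ∈ Ioo (0:ℝ) 1 :=
        fun l hl => ⟨lt_trans hμ₀.1 hl.1, hl.2⟩
      have hsq : ∀ l ∈ Ioo μ₀ 1, ∀ l' ∈ Ioo μ₀ 1, l' ≤ l →
          dist (y l) (y l') ^ 2 ≤ ε^2/2 := by
        intro l hl l' hl' hle
        have h1 := KL l' (hsub l' hl') l (hsub l hl) hle
        have h2 := KL μ₀ hμ₀ l' (hsub l' hl') hl'.1.le
        have h3 := hleS l (hsub l hl)
        have hx' : S - ε^2/2 < ‖y μ₀‖^2 := hx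
        rw [dist_eq_norm]
        linarith [sq_nonneg ‖y l' - y μ₀‖]
      rcases le_total l₂ l₁ with h | h
      · have := hsq l₁ hl₁ l₂ hl₂ h
        nlinarith [dist_nonneg (x := y l₁) (y := y l₂)]
      · have := hsq l₂ hl₂ l₁ hl₁ h
        rw [dist_comm]
        nlinarith [dist_nonneg (x := y l₂) (y := y l₁)]
  obtain ⟨xstar, hxstar⟩ := CompleteSpace.complete hcauchy
  have hx : Tendsto y L (𝓝 xstar) := hxstar
  have hyC : ∀ᶠ l in L, y l ∈ C := by
    filter_upwards [self_mem_nhdsWithin] with l hl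
    exact (hy l hl).1
  have hxC : xstar ∈ C := hCclosed.mem_of_tendsto hx hyC
  -- fixed point
  have hxCw : Tendsto y L (𝓝[C] xstar) := by
    rw [tendsto_nhdsWithin_iff]
    exact ⟨hx, hyC⟩
  have hfx1 : Tendsto (fun l => f (y l)) L (𝓝 (f xstar)) :=
    ((hlip.continuousOn xstar hxC).tendsto).comp hxCw
  have hid : Tendsto (fun l : ℝ => l) L (𝓝 1) := tendsto_id.mono_left nhdsWithin_le_nhds
  have hfx2 : Tendsto (fun l => f (y l)) L (𝓝 xstar) := by
    have h1 : Tendsto (fun l : ℝ => l⁻¹ • y l) L (𝓝 ((1:ℝ)⁻¹ • xstar)) :=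
      (hid.inv₀ one_ne_zero).smul hx
    rw [inv_one, one_smul] at h1
    refine h1.congr' ?_
    filter_upwards [self_mem_nhdsWithin] with l hl
    have := (hy l hl).2
    rw [eq_comm, ← inv_smul_eq_iff₀ (ne_of_gt hl.1)] at this
    exact this
  have hfix : f xstar = xstar := tendsto_nhds_unique hfx1 hfx2
  refine ⟨xstar, hxC, hfix, ?_, ?_⟩
  · -- minimal norm
    intro z hz hzfix
    have hptwise : ∀ᶠ l in L, ‖y l - z‖^2 ≤ ⟪z, z - y l⟫ := by
      filter_upwards [self_mem_nhdsWithin] with l hl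
      have hk := key l hl 1 one_pos le_rfl z hz (by rw [one_smul, hzfix])
      have hl1 : 0 < 1 - l := by linarith [hl.2]
      have : ⟪z, z - y l⟫ = -⟪z, y l - z⟫ := by
        rw [← inner_neg_right]; congr 1; abel
      rw [this]
      have hkk : (1 - l) * ‖y l - z‖^2 ≤ (1 - l) * -⟪z, y l - z⟫ := by nlinarith [hk]
      exact le_of_mul_le_mul_left hkk hl1
    have hlim1 : Tendsto (fun l => ‖y l - z‖^2) L (𝓝 (‖xstar - z‖^2)) := by
      exact ((hx.sub tendsto_const_nhds).norm).pow 2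
    have hlim2 : Tendsto (fun l => ⟪z, z - y l⟫) L (𝓝 (⟪z, z - xstar⟫)) :=
      (tendsto_const_nhds : Tendsto (fun _ : ℝ => z) L (𝓝 z)).inner
        (tendsto_const_nhds.sub hx)
    have hineq : ‖xstar - z‖^2 ≤ ⟪z, z - xstar⟫ := le_of_tendsto_of_tendsto hlim1 hlim2 hptwise
    have he1 : ‖xstar - z‖^2 = ‖xstar‖^2 - 2 * ⟪xstar, z⟫ + ‖z‖^2 := norm_sub_sq_real _ _
    have he2 : ⟪z, z - xstar⟫ = ‖z‖^2 - ⟪xstar, z⟫ := by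
      rw [inner_sub_right, real_inner_self_eq_norm_sq, real_inner_comm]
    rw [he1, he2] at hineq
    have hxz : ‖xstar‖^2 ≤ ⟪xstar, z⟫ := by linarith
    have hcs : ⟪xstar, z⟫ ≤ ‖xstar‖ * ‖z‖ := real_inner_le_norm _ _
    nlinarith [norm_nonneg xstar, norm_nonneg z]
  · intro v
    exact hx.inner tendsto_const_nhds
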